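/- Symmetric-noise risk identity: for any classifier f and any noise rate η ∈ [0, 1), the noisy risk satisfies R^η(f) = (1 - ηK/(K-1)) · R(f) - A · η. -/

import Mathlib

open Finset MeasureTheory

/-- Clipped logarithm: `L t = Real.log t` for `t > 0` and `L 0 = A`. -/
noncomputable def clog (A : ℝ) (t : ℝ) : ℝ := if t = 0 then A else Real.log t

/-- One-hot vector at label `y`. -/
def onehot {K : ℕ} (y : Fin K) : Fin K → ℝ := fun k => if k = y then 1 else 0

/-- Reverse Cross Entropy loss with clipping constant `A`. -/
noncomputable def rce {K : ℕ} (A : ℝ) (p : Fin K → ℝ) (y : Fin K) : ℝ :=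
  -∑ k, p k * clog A (onehot y k)

/-- `p` is a probability vector. -/
def IsProbVec {K : ℕ} (p : Fin K → ℝ) : Prop := (∀ k, 0 ≤ p k) ∧ ∑ k, p k = 1

/-- A classifier: pointwise a probability vector, coordinatewise measurable. -/
def IsClassifier {𝒳 : Type*} [MeasurableSpace 𝒳] {K : ℕ} (f : 𝒳 → Fin K → ℝ) : Prop :=
  (∀ x, IsProbVec (f x)) ∧ ∀ k : Fin K, Measurable fun xy : 𝒳 × Fin K => f xy.1 k

/-- Clean RCE risk `R(f) = ∫ ℓ_rce(f x, y) dμ(x, y)`. -/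
noncomputable def cleanRisk {𝒳 : Type*} [MeasurableSpace 𝒳] {K : ℕ} (A : ℝ)
    (μ : Measure (𝒳 × Fin K)) (f : 𝒳 → Fin K → ℝ) : ℝ :=
  ∫ xy, rce A (f xy.1) xy.2 ∂μ

/-- Noisy RCE risk under symmetric label noise with rate `η`. -/
noncomputable def symNoisyRisk {𝒳 : Type*} [MeasurableSpace 𝒳] {K : ℕ} (A : ℝ)
    (μ : Measure (𝒳 × Fin K)) (η : ℝ) (f : 𝒳 → Fin K → ℝ) : ℝ :=
  ∫ xy, ((1 - η) * rce A (f xy.1) xy.2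
      + (η / ((K : ℝ) - 1)) * ∑ k ∈ univ \ {xy.2}, rce A (f xy.1) k) ∂μ


lemma rce_eq {K : ℕ} (A : ℝ) {p : Fin K → ℝ} (hp : ∑ k, p k = 1) (y : Fin K) :
    rce A p y = A * p y - A := by
  have h : ∀ k, p k * clog A (onehot y k) = p k * A - (if k = y then p k * A else 0) := by
    intro k
    by_cases h : k = y <;> simp [onehot, clog, h]
  simp only [rce, h, Finset.sum_sub_distrib, Finset.sum_ite_eq', Finset.mem_univ, if_true,
    ← Finset.sum_mul, hp]
  ring

lemma rce_sum {K : ℕ} (A : ℝ) {p : Fin K → ℝ} (hp : ∑ k, p k = 1) (y : Fin K) :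
    ∑ k ∈ univ \ {y}, rce A p k = A * (1 - p y) - A * ((K : ℝ) - 1) := by
  have h : ∀ k ∈ univ \ {y}, rce A p k = A * p k - A := fun k _ => rce_eq A hp k
  rw [Finset.sum_congr rfl h, Finset.sum_sub_distrib, Finset.sum_const, ← Finset.mul_sum]
  have hcard : (univ \ {y}).card = K - 1 := by
    rw [Finset.card_sdiff_of_subset (by simp)]; simp
  have hsum : ∑ k ∈ univ \ {y}, p k = 1 - p y := by
    have := Finset.sum_sdiff (Finset.subset_univ {y}) (f := p)
    simp only [Finset.sum_singleton] at this
    linarith [hp ▸ this]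
  rw [hsum, hcard]
  rcases K with _ | K
  · exact absurd y.2 (by simp)
  · push_cast [Nat.succ_sub_one]
    ring

/-- Symmetric-noise risk identity: for any classifier `f` and any noise rate `η ∈ [0, 1)`,
the noisy risk satisfies `R^η(f) = (1 - ηK/(K-1)) · R(f) - A · η`. -/
theorem symNoisyRisk_eq {𝒳 : Type*} [MeasurableSpace 𝒳] {K : ℕ} (hK : 2 ≤ K)
    (A : ℝ) (hA : A < 0) (μ : Measure (𝒳 × Fin K)) [IsProbabilityMeasure μ]
    (f : 𝒳 → Fin K → ℝ) (hf : IsClassifier f)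
    (η : ℝ) (hη0 : 0 ≤ η) (hη1 : η < 1) :
    symNoisyRisk A μ η f = (1 - η * K / ((K : ℝ) - 1)) * cleanRisk A μ f - A * η := by

  have hK1 : ((K : ℝ) - 1) ≠ 0 := by
    have : (2 : ℝ) ≤ K := by exact_mod_cast hK
    linarith
  have hmeas : Measurable fun xy : 𝒳 × Fin K => f xy.1 xy.2 := by
    have he : (fun xy : 𝒳 × Fin K => f xy.1 xy.2)
        = fun xy => ∑ k, if xy.2 = k then f xy.1 k else 0 := by
      funext xy; simp
    rw [he]
    exact Finset.measurable_sum _ fun k _ =>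
      Measurable.ite (measurable_snd (measurableSet_singleton k)) (hf.2 k) measurable_const
  have hint : Integrable (fun xy : 𝒳 × Fin K => rce A (f xy.1) xy.2) μ := by
    have hg : (fun xy : 𝒳 × Fin K => rce A (f xy.1) xy.2)
        = fun xy => A * f xy.1 xy.2 - A := by
      funext xy; exact rce_eq A (hf.1 xy.1).2 xy.2
    rw [hg]
    refine Integrable.mono' (integrable_const (|A| + |A|))
      ((hmeas.const_mul A).sub measurable_const).aestronglyMeasurable ?_
    filter_upwards with xy
    have h0 := (hf.1 xy.1).1 xy.2
    have h1 : f xy.1 xy.2 ≤ 1 := by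
      have := Finset.single_le_sum (f := f xy.1) (fun k _ => (hf.1 xy.1).1 k)
        (Finset.mem_univ xy.2)
      rwa [(hf.1 xy.1).2] at this
    have hb : |A * f xy.1 xy.2| ≤ |A| := by
      rw [abs_mul, abs_of_nonneg h0]
      nlinarith [abs_nonneg A]
    calc |A * f xy.1 xy.2 - A| ≤ |A * f xy.1 xy.2| + |A| := abs_sub _ _
      _ ≤ |A| + |A| := by linarith
  have heq : ∀ xy : 𝒳 × Fin K,
      (1 - η) * rce A (f xy.1) xy.2
        + (η / ((K : ℝ) - 1)) * ∑ k ∈ univ \ {xy.2}, rce A (f xy.1) k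
      = (1 - η * ↑K / ((K : ℝ) - 1)) * rce A (f xy.1) xy.2 - A * η := by
    intro xy
    rw [rce_eq A (hf.1 xy.1).2 xy.2, rce_sum A (hf.1 xy.1).2 xy.2]
    field_simp
    ring
  unfold symNoisyRisk
  simp only [heq]
  rw [integral_sub (hint.const_mul _) (integrable_const _), MeasureTheory.integral_const_mul,
    integral_const, probReal_univ]
  simp [cleanRisk]
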